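/- (HMC Rolle's theorem) Let u < v be real numbers and let f : [u,v]_ℚ → ℝ be a function whose derivative f' is defined at every point of [u,v]_ℚ, is uniform on [u,v]_ℚ, and is uniformly continuous, and suppose f(u) = f(v) (extended values). Then there exists a real number x with u < x < v and f'(x) = 0, where f'(x) denotes the extended value of f' at x. -/

import Mathlib

open Filter Topology

/-- The rational interval [u,v]_ℚ = {a ∈ ℚ : u ≤ a ≤ v}. -/
def RatIcc (u v : ℝ) : Set ℚ := {a : ℚ | u ≤ (a : ℝ) ∧ (a : ℝ) ≤ v}

/-- Uniform continuity of f : M → ℝ for M ⊆ ℚ. -/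
def UC (M : Set ℚ) (f : ℚ → ℝ) : Prop :=
  ∀ ε : ℝ, 0 < ε → ∃ δ : ℝ, 0 < δ ∧
    ∀ a ∈ M, ∀ b ∈ M, |(a : ℝ) - (b : ℝ)| ≤ δ → |f a - f b| ≤ ε

/-- y is the extended value of f at x: every sequence in M converging to x has
f-images converging to y. -/
def ExtVal (M : Set ℚ) (f : ℚ → ℝ) (x y : ℝ) : Prop :=
  ∀ a : ℕ → ℚ, (∀ n, a n ∈ M) →
    Tendsto (fun n => ((a n : ℝ))) atTop (𝓝 x) →
    Tendsto (fun n => f (a n)) atTop (𝓝 y)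

/-- The derivative of f at a ∈ M equals y. -/
def HasDerivAtPt (M : Set ℚ) (f : ℚ → ℝ) (a : ℚ) (y : ℝ) : Prop :=
  ∀ ε : ℝ, 0 < ε → ∃ δ : ℝ, 0 < δ ∧
    ∀ b ∈ M, 0 < |(b : ℝ) - (a : ℝ)| → |(b : ℝ) - (a : ℝ)| ≤ δ →
      |(f b - f a) / ((b : ℝ) - (a : ℝ)) - y| ≤ ε

/-- The derivative function f' is uniform on D ⊆ M: the difference quotients converge
to f' uniformly in the base point a ∈ D. -/
def UniformDeriv (M : Set ℚ) (f : ℚ → ℝ) (D : Set ℚ) (f' : ℚ → ℝ) : Prop :=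
  ∀ ε : ℝ, 0 < ε → ∃ δ : ℝ, 0 < δ ∧
    ∀ a ∈ D, ∀ b ∈ M, 0 < |(b : ℝ) - (a : ℝ)| → |(b : ℝ) - (a : ℝ)| ≤ δ →
      |(f b - f a) / ((b : ℝ) - (a : ℝ)) - f' a| ≤ ε

/-- HMC Rolle's theorem: if f : [u,v]_ℚ → ℝ has a derivative f' defined everywhere,
uniform and UC on [u,v]_ℚ, and the extended values f(u), f(v) coincide, then the
extended value of f' vanishes at some x with u < x < v. -/
lemma approx_right (r t : ℝ) (h : r < t) :
    ∃ p : ℕ → ℚ, (∀ n, r < (p n : ℝ) ∧ (p n : ℝ) < t) ∧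
      Tendsto (fun n => ((p n : ℝ))) atTop (𝓝 r) := by
  have h1 : ∀ n : ℕ, ∃ q : ℚ, r < (q:ℝ) ∧ (q:ℝ) < min t (r + 1/(n+1)) := by
    intro n
    exact exists_rat_btwn (lt_min h (lt_add_of_pos_right _ (by positivity)))
  choose p hp1 hp2 using h1
  refine ⟨p, fun n => ⟨hp1 n, (hp2 n).trans_le (min_le_left _ _)⟩, ?_⟩
  have hup : Tendsto (fun n : ℕ => r + 1/(n+1 : ℝ)) atTop (𝓝 r) := by
    have : Tendsto (fun n : ℕ => 1/((n:ℝ)+1)) atTop (𝓝 0) := tendsto_one_div_add_atTop_nhds_zero_nat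
    simpa using tendsto_const_nhds.add this
  refine tendsto_of_tendsto_of_tendsto_of_le_of_le tendsto_const_nhds hup
    (fun n => le_of_lt (hp1 n)) (fun n => le_of_lt ?_)
  exact (hp2 n).trans_le (min_le_right _ _)

lemma approx_left (r t : ℝ) (h : r < t) :
    ∃ p : ℕ → ℚ, (∀ n, r < (p n : ℝ) ∧ (p n : ℝ) < t) ∧
      Tendsto (fun n => ((p n : ℝ))) atTop (𝓝 t) := by
  have h1 : ∀ n : ℕ, ∃ q : ℚ, max r (t - 1/(n+1)) < (q:ℝ) ∧ (q:ℝ) < t := by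
    intro n
    exact exists_rat_btwn (max_lt h (by nlinarith [one_div_pos.2 (by positivity : (0:ℝ) < (n:ℝ)+1)]))
  choose p hp1 hp2 using h1
  refine ⟨p, fun n => ⟨lt_of_le_of_lt (le_max_left _ _) (hp1 n), hp2 n⟩, ?_⟩
  have hlo : Tendsto (fun n : ℕ => t - 1/(n+1 : ℝ)) atTop (𝓝 t) := by
    have : Tendsto (fun n : ℕ => 1/((n:ℝ)+1)) atTop (𝓝 0) := tendsto_one_div_add_atTop_nhds_zero_nat
    simpa using tendsto_const_nhds.sub this
  refine tendsto_of_tendsto_of_tendsto_of_le_of_le hlo tendsto_const_nhds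
    (fun n => le_of_lt (lt_of_le_of_lt (le_max_right _ _) (hp1 n))) (fun n => le_of_lt (hp2 n))

lemma hmc_mono (u v : ℝ) (f f' : ℚ → ℝ)
    (hunif : UniformDeriv (RatIcc u v) f (RatIcc u v) f')
    (hpos : ∀ a ∈ RatIcc u v, 0 ≤ f' a)
    (a b : ℚ) (ha : a ∈ RatIcc u v) (hb : b ∈ RatIcc u v) (hab : a ≤ b) :
    f a ≤ f b := by
  rcases eq_or_lt_of_le hab with rfl | hlt
  · exact le_refl _
  have hba : (0:ℝ) < (b:ℝ) - a := by exact_mod_cast sub_pos.2 hlt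
  have key : ∀ ε : ℝ, 0 < ε → f a - f b ≤ ε * ((b:ℝ) - a) := by
    intro ε hε
    obtain ⟨δ, hδ, H⟩ := hunif ε hε
    obtain ⟨n, hn⟩ : ∃ n : ℕ, ((b:ℝ) - a) / (n+1) ≤ δ := by
      obtain ⟨n, hn⟩ := exists_nat_gt (((b:ℝ) - a)/δ)
      refine ⟨n, ?_⟩
      rw [div_le_iff₀ (by positivity)]
      rw [div_lt_iff₀ hδ] at hn
      nlinarith
    set step : ℚ := (b - a) / (n+1) with hstepdef
    have hstep : 0 < step := by
      apply div_pos (sub_pos.2 hlt); positivity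
    have hstepR : ((step : ℝ)) = ((b:ℝ) - a) / (n+1) := by push_cast [hstepdef]; ring
    set g : ℕ → ℚ := fun i => a + i * step with hgdef
    have hgn : g (n+1) = b := by
      simp only [hgdef, hstepdef]
      field_simp
      push_cast; ring
    have hgmem : ∀ i : ℕ, i ≤ n+1 → g i ∈ RatIcc u v := by
      intro i hi
      have h1 : a ≤ g i := by
        simp only [hgdef]
        nlinarith [hstep, (by exact_mod_cast Nat.zero_le i : (0:ℚ) ≤ (i:ℚ))]
      have h2 : g i ≤ b := by
        have hi' : (i:ℚ) ≤ (n:ℚ)+1 := by exact_mod_cast hi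
        have : (i:ℚ) * step ≤ ((n:ℚ)+1) * step := by nlinarith
        have hnb : ((n:ℚ)+1) * step = b - a := by
          simp only [hstepdef]; field_simp
        simp only [hgdef]
        nlinarith
      constructor
      · exact le_trans ha.1 (by exact_mod_cast h1)
      · exact le_trans (by exact_mod_cast h2) hb.2
    have hIstep : ∀ i : ℕ, i ≤ n → f (g i) - ε * (step:ℝ) ≤ f (g (i+1)) := by
      intro i hi
      have hmi : g i ∈ RatIcc u v := hgmem i (by omega)
      have hmi1 : g (i+1) ∈ RatIcc u v := hgmem (i+1) (by omega)
      have hdiff : ((g (i+1) : ℝ)) - (g i : ℝ) = (step:ℝ) := by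
        simp only [hgdef]; push_cast; ring
      have hpos' : 0 < |((g (i+1) : ℝ)) - (g i : ℝ)| := by
        rw [hdiff, abs_of_pos (by exact_mod_cast hstep)]
        exact_mod_cast hstep
      have hle : |((g (i+1) : ℝ)) - (g i : ℝ)| ≤ δ := by
        rw [hdiff, abs_of_pos (by exact_mod_cast hstep), hstepR]
        exact hn
      have := H (g i) hmi (g (i+1)) hmi1 hpos' hle
      rw [hdiff] at this
      have hstepR' : (0:ℝ) < (step:ℝ) := by exact_mod_cast hstep
      have hq := (abs_le.1 this).1
      have hf' := hpos (g i) hmi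
      have : (f (g (i+1)) - f (g i)) / (step:ℝ) ≥ f' (g i) - ε := by linarith
      have h2 : f (g (i+1)) - f (g i) ≥ (f' (g i) - ε) * (step:ℝ) := by
        rw [ge_iff_le, ← le_div_iff₀ hstepR']
        linarith [this]
      nlinarith
    have htel : ∀ k : ℕ, k ≤ n+1 → f a - ε * (k * (step:ℝ)) ≤ f (g k) := by
      intro k
      induction k with
      | zero => intro _; simp [hgdef]
      | succ m ih =>
        intro hm
        have h1 := ih (by omega)
        have h2 := hIstep m (by omega)
        push_cast
        have hsr : (0:ℝ) < (step:ℝ) := by exact_mod_cast hstep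
        nlinarith
    have hfin := htel (n+1) (le_refl _)
    rw [hgn] at hfin
    have : ((n:ℝ)+1) * (step:ℝ) = (b:ℝ) - a := by
      rw [hstepR]; field_simp
    push_cast at hfin
    nlinarith
  by_contra hcon
  push_neg at hcon
  have hd : 0 < f a - f b := sub_pos.2 hcon
  have hk := key ((f a - f b) / (2 * ((b:ℝ) - a))) (by positivity)
  have : (f a - f b) / (2 * ((b:ℝ) - a)) * ((b:ℝ) - a) = (f a - f b)/2 := by
    field_simp
  rw [this] at hk
  linarith

lemma hmc_contra (u v : ℝ) (f f' : ℚ → ℝ)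
    (hunif : UniformDeriv (RatIcc u v) f (RatIcc u v) f')
    (hpos : ∀ a ∈ RatIcc u v, 0 ≤ f' a)
    (fu fv : ℝ) (hfu : ExtVal (RatIcc u v) f u fu) (hfv : ExtVal (RatIcc u v) f v fv)
    (heq : fu = fv)
    (c : ℚ) (hcu : u < (c:ℝ)) (hcv : (c:ℝ) < v) (hc' : 0 < f' c) : False := by
  have hMc : c ∈ RatIcc u v := ⟨le_of_lt hcu, le_of_lt hcv⟩
  obtain ⟨δ, hδ, H⟩ := hunif (f' c / 2) (half_pos hc')
  obtain ⟨b, hb1, hb2⟩ := exists_rat_btwn (lt_min hcv (lt_add_of_pos_right (c:ℝ) hδ))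
  have hbv : (b:ℝ) < v := lt_of_lt_of_le hb2 (min_le_left _ _)
  have hbδ : (b:ℝ) ≤ (c:ℝ) + δ := le_of_lt (lt_of_lt_of_le hb2 (min_le_right _ _))
  have hMb : b ∈ RatIcc u v := ⟨le_of_lt (lt_trans hcu hb1), le_of_lt hbv⟩
  have hbc : (0:ℝ) < (b:ℝ) - c := sub_pos.2 hb1
  have hfb : f c < f b := by
    have h1 : 0 < |(b:ℝ) - (c:ℝ)| := by rwa [abs_of_pos hbc]
    have h2 : |(b:ℝ) - (c:ℝ)| ≤ δ := by rw [abs_of_pos hbc]; linarith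
    have h3 := H c hMc b hMb h1 h2
    have hq := (abs_le.1 h3).1
    have : (f b - f c) / ((b:ℝ) - c) ≥ f' c / 2 := by linarith
    have h4 : f' c / 2 * ((b:ℝ) - c) ≤ f b - f c := (le_div_iff₀ hbc).1 this
    nlinarith [mul_pos (half_pos hc') hbc]
  -- fu ≤ f c
  obtain ⟨p, hp, hptend⟩ := approx_right u (c:ℝ) hcu
  have hpM : ∀ n, p n ∈ RatIcc u v := fun n =>
    ⟨le_of_lt (hp n).1, le_of_lt (lt_trans (hp n).2 hcv)⟩
  have hfuc : fu ≤ f c := by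
    refine le_of_tendsto (hfu p hpM hptend) (Eventually.of_forall fun n => ?_)
    exact hmc_mono u v f f' hunif hpos (p n) c (hpM n) hMc (by exact_mod_cast le_of_lt (hp n).2)
  -- f b ≤ fv
  obtain ⟨q, hq, hqtend⟩ := approx_left (b:ℝ) v hbv
  have hqM : ∀ n, q n ∈ RatIcc u v := fun n =>
    ⟨le_of_lt (lt_trans (lt_trans hcu hb1) (hq n).1), le_of_lt (hq n).2⟩
  have hfbv : f b ≤ fv := by
    refine ge_of_tendsto (hfv q hqM hqtend) (Eventually.of_forall fun n => ?_)
    exact hmc_mono u v f f' hunif hpos b (q n) hMb (hqM n) (by exact_mod_cast le_of_lt (hq n).1)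
  linarith

theorem hmc_rolle (u v : ℝ) (huv : u < v) (f f' : ℚ → ℝ)
    (hderiv : ∀ a ∈ RatIcc u v, HasDerivAtPt (RatIcc u v) f a (f' a))
    (hunif : UniformDeriv (RatIcc u v) f (RatIcc u v) f')
    (hUC : UC (RatIcc u v) f')
    (fu fv : ℝ)
    (hfu : ExtVal (RatIcc u v) f u fu)
    (hfv : ExtVal (RatIcc u v) f v fv)
    (heq : fu = fv) :
    ∃ x : ℝ, u < x ∧ x < v ∧ ExtVal (RatIcc u v) f' x 0 := by
  classical
  -- clamp to [u,v]
  set cl : ℝ → ℝ := fun x => max u (min v x) with hcldef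
  have hclmem : ∀ x : ℝ, cl x ∈ Set.Icc u v := by
    intro x
    refine ⟨le_max_left _ _, max_le (le_of_lt huv) (min_le_left _ _)⟩
  have hclid : ∀ x ∈ Set.Icc u v, cl x = x := by
    rintro x ⟨h1, h2⟩
    simp only [hcldef]
    rw [min_eq_right h2, max_eq_right h1]
  -- approximating rationals in the open interval
  have hnear : ∀ (x : ℝ) (n : ℕ), ∃ q : ℚ,
      u < (q:ℝ) ∧ (q:ℝ) < v ∧ |(q:ℝ) - cl x| < 1/(n+1) := by
    intro x n
    obtain ⟨h1, h2⟩ := hclmem x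
    have hε : (0:ℝ) < 1/(n+1) := by positivity
    have hlo : max u (cl x - 1/(n+1)) < min v (cl x + 1/(n+1)) := by
      apply max_lt
      · exact lt_min huv (by linarith)
      · exact lt_min (by linarith) (by linarith)
    obtain ⟨q, hq1, hq2⟩ := exists_rat_btwn hlo
    refine ⟨q, lt_of_le_of_lt (le_max_left _ _) hq1,
      lt_of_lt_of_le hq2 (min_le_left _ _), ?_⟩
    rw [abs_sub_lt_iff]
    constructor
    · linarith [lt_of_lt_of_le hq2 (min_le_right _ _)]
    · linarith [lt_of_le_of_lt (le_max_right _ _) hq1]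
  choose s hs1 hs2 hs3 using hnear
  have hsM : ∀ x n, s x n ∈ RatIcc u v := fun x n => ⟨le_of_lt (hs1 x n), le_of_lt (hs2 x n)⟩
  have hone : Tendsto (fun n : ℕ => 1/((n:ℝ)+1)) atTop (𝓝 0) :=
    tendsto_one_div_add_atTop_nhds_zero_nat
  -- s x n → cl x
  have hstend : ∀ x : ℝ, Tendsto (fun n => ((s x n : ℝ))) atTop (𝓝 (cl x)) := by
    intro x
    rw [Metric.tendsto_atTop]
    intro ε hε
    obtain ⟨N, hN⟩ := exists_nat_one_div_lt hε
    refine ⟨N, fun n hn => ?_⟩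
    rw [Real.dist_eq]
    calc |(s x n : ℝ) - cl x| < 1/(n+1) := hs3 x n
      _ ≤ 1/(N+1) := by
          apply one_div_le_one_div_of_le (by positivity)
          have : (N:ℝ) ≤ n := by exact_mod_cast hn
          linarith
      _ < ε := hN
  -- G exists
  have hGex : ∀ x : ℝ, ∃ y, Tendsto (fun n => f' (s x n)) atTop (𝓝 y) := by
    intro x
    apply cauchySeq_tendsto_of_complete
    rw [Metric.cauchySeq_iff']
    intro ε hε
    obtain ⟨δ, hδ, HU⟩ := hUC (ε/2) (half_pos hε)
    obtain ⟨N, hN⟩ := exists_nat_one_div_lt (half_pos hδ)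
    refine ⟨N, fun n hn => ?_⟩
    rw [Real.dist_eq]
    have hd : |(s x n : ℝ) - (s x N : ℝ)| ≤ δ := by
      have h1 := hs3 x n
      have h2 := hs3 x N
      have h3 : 1/((n:ℝ)+1) ≤ 1/((N:ℝ)+1) := by
        apply one_div_le_one_div_of_le (by positivity)
        have : (N:ℝ) ≤ n := by exact_mod_cast hn
        linarith
      calc |(s x n : ℝ) - (s x N : ℝ)|
          ≤ |(s x n : ℝ) - cl x| + |(cl x) - (s x N : ℝ)| := abs_sub_le _ _ _
        _ ≤ 1/((n:ℝ)+1) + 1/((N:ℝ)+1) := by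
            rw [abs_sub_comm (cl x)]
            exact add_le_add (le_of_lt h1) (le_of_lt h2)
        _ ≤ δ/2 + δ/2 := add_le_add (le_of_lt (lt_of_le_of_lt h3 hN)) (le_of_lt hN)
        _ = δ := by ring
    exact lt_of_le_of_lt (HU _ (hsM x n) _ (hsM x N) hd) (by linarith)
  choose G hG using hGex
  -- G agrees with f' on rationals and is the ExtVal
  have hGext : ∀ x ∈ Set.Icc u v, ExtVal (RatIcc u v) f' x (G x) := by
    intro x hx a haM hax
    have hdiff : Tendsto (fun n => f' (a n) - f' (s x n)) atTop (𝓝 0) := by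
      rw [Metric.tendsto_atTop]
      intro ε hε
      obtain ⟨δ, hδ, HU⟩ := hUC (ε/2) (half_pos hε)
      rw [Metric.tendsto_atTop] at hax
      obtain ⟨N1, hN1⟩ := hax (δ/2) (half_pos hδ)
      obtain ⟨N2, hN2⟩ := exists_nat_one_div_lt (half_pos hδ)
      refine ⟨max N1 N2, fun n hn => ?_⟩
      have hn1 := hN1 n (le_trans (le_max_left _ _) hn)
      have hn2 : 1/((n:ℝ)+1) ≤ 1/((N2:ℝ)+1) := by
        apply one_div_le_one_div_of_le (by positivity)
        have : (N2:ℕ) ≤ n := le_trans (le_max_right _ _) hn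
        have : (N2:ℝ) ≤ n := by exact_mod_cast this
        linarith
      rw [Real.dist_eq] at hn1 ⊢
      have hclx : cl x = x := hclid x hx
      have hd : |(a n : ℝ) - (s x n : ℝ)| ≤ δ := by
        calc |(a n : ℝ) - (s x n : ℝ)|
            ≤ |(a n : ℝ) - x| + |x - (s x n : ℝ)| := abs_sub_le _ _ _
          _ ≤ δ/2 + δ/2 := by
              refine add_le_add (le_of_lt hn1) ?_
              rw [abs_sub_comm]
              have := hs3 x n
              rw [hclx] at this
              linarith [lt_of_le_of_lt hn2 hN2]
          _ = δ := by ring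
      have := HU _ (haM n) _ (hsM x n) hd
      calc |f' (a n) - f' (s x n) - 0| = |f' (a n) - f' (s x n)| := by rw [sub_zero]
        _ ≤ ε/2 := this
        _ < ε := by linarith
    have := hdiff.add (hG x)
    simp only [zero_add] at this
    convert this using 2 with n
    ring
  have hGQ : ∀ a : ℚ, a ∈ RatIcc u v → G (a:ℝ) = f' a := by
    intro a haM
    have h1 := hGext (a:ℝ) ⟨haM.1, haM.2⟩ (fun _ => a) (fun _ => haM) tendsto_const_nhds
    exact tendsto_nhds_unique h1 tendsto_const_nhds
  -- uniform continuity of G on [u,v]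
  have hGuc : ∀ ε : ℝ, 0 < ε → ∃ δ : ℝ, 0 < δ ∧ ∀ x ∈ Set.Icc u v, ∀ y ∈ Set.Icc u v,
      |x - y| ≤ δ → |G x - G y| ≤ ε := by
    intro ε hε
    obtain ⟨δ, hδ, HU⟩ := hUC ε hε
    refine ⟨δ/2, half_pos hδ, fun x hx y hy hxy => ?_⟩
    have htendabs : Tendsto (fun n => |f' (s x n) - f' (s y n)|) atTop (𝓝 |G x - G y|) :=
      ((hG x).sub (hG y)).abs
    refine le_of_tendsto htendabs ?_
    have hev : ∀ᶠ n : ℕ in atTop, 1/((n:ℝ)+1) ≤ δ/4 := by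
      obtain ⟨N, hN⟩ := exists_nat_one_div_lt (by positivity : (0:ℝ) < δ/4)
      filter_upwards [eventually_ge_atTop N] with n hn
      have h3 : 1/((n:ℝ)+1) ≤ 1/((N:ℝ)+1) := by
        apply one_div_le_one_div_of_le (by positivity)
        have : (N:ℝ) ≤ n := by exact_mod_cast hn
        linarith
      linarith
    filter_upwards [hev] with n hn
    apply HU _ (hsM x n) _ (hsM y n)
    have h1 := hs3 x n; have h2 := hs3 y n
    rw [hclid x hx] at h1; rw [hclid y hy] at h2
    calc |(s x n : ℝ) - (s y n : ℝ)|
        ≤ |(s x n : ℝ) - x| + |x - (s y n : ℝ)| := abs_sub_le _ _ _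
      _ ≤ |(s x n : ℝ) - x| + (|x - y| + |y - (s y n : ℝ)|) := by
          exact add_le_add (le_refl _) (abs_sub_le _ _ _)
      _ ≤ δ/4 + (δ/2 + δ/4) := by
          refine add_le_add ?_ (add_le_add hxy ?_)
          · linarith [lt_of_lt_of_le h1 hn]
          · rw [abs_sub_comm]; linarith [lt_of_lt_of_le h2 hn]
      _ = δ := by ring
  have hGcont : ContinuousOn G (Set.Icc u v) := by
    rw [Metric.continuousOn_iff]
    intro b hb ε hε
    obtain ⟨δ, hδ, HH⟩ := hGuc (ε/2) (half_pos hε)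
    refine ⟨δ, hδ, fun a ha hab => ?_⟩
    rw [Real.dist_eq] at hab ⊢
    exact lt_of_le_of_lt (HH a ha b hb (le_of_lt hab)) (by linarith)
  -- main casework
  by_cases h0 : ∃ x ∈ Set.Ioo u v, G x = 0
  · obtain ⟨x, hx, hx0⟩ := h0
    exact ⟨x, hx.1, hx.2, hx0 ▸ hGext x (Set.mem_Icc_of_Ioo hx)⟩
  push_neg at h0
  exfalso
  -- constant sign on (u,v)
  have hIoo_sub : Set.Ioo u v ⊆ Set.Icc u v := Set.Ioo_subset_Icc_self
  have hsign : (∀ x ∈ Set.Ioo u v, 0 < G x) ∨ (∀ x ∈ Set.Ioo u v, G x < 0) := by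
    set m := (u+v)/2 with hm
    have hmIoo : m ∈ Set.Ioo u v := ⟨by simp only [hm]; linarith, by simp only [hm]; linarith⟩
    rcases lt_trichotomy (G m) 0 with hGm | hGm | hGm
    · right
      intro x hx
      by_contra hGx
      push_neg at hGx
      have hGx' : 0 < G x := lt_of_le_of_ne hGx (Ne.symm (h0 x hx))
      rcases lt_trichotomy x m with hxm | hxm | hxm
      · have hsub : Set.Icc x m ⊆ Set.Icc u v := Set.Icc_subset_Icc (le_of_lt hx.1) (le_of_lt hmIoo.2)
        have := intermediate_value_Icc' (le_of_lt hxm) (hGcont.mono hsub)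
        obtain ⟨z, hz, hz0⟩ := this ⟨le_of_lt hGm, le_of_lt hGx'⟩
        exact h0 z ⟨lt_of_lt_of_le hx.1 hz.1, lt_of_le_of_lt hz.2 hmIoo.2⟩ hz0
      · exact absurd (hxm ▸ hGx') (lt_asymm hGm)
      · have hsub : Set.Icc m x ⊆ Set.Icc u v := Set.Icc_subset_Icc (le_of_lt hmIoo.1) (le_of_lt hx.2)
        have := intermediate_value_Icc (le_of_lt hxm) (hGcont.mono hsub)
        obtain ⟨z, hz, hz0⟩ := this ⟨le_of_lt hGm, le_of_lt hGx'⟩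
        exact h0 z ⟨lt_of_lt_of_le hmIoo.1 hz.1, lt_of_le_of_lt hz.2 hx.2⟩ hz0
    · exact absurd hGm (h0 m hmIoo)
    · left
      intro x hx
      by_contra hGx
      push_neg at hGx
      have hGx' : G x < 0 := lt_of_le_of_ne hGx (h0 x hx)
      rcases lt_trichotomy x m with hxm | hxm | hxm
      · have hsub : Set.Icc x m ⊆ Set.Icc u v := Set.Icc_subset_Icc (le_of_lt hx.1) (le_of_lt hmIoo.2)
        have := intermediate_value_Icc (le_of_lt hxm) (hGcont.mono hsub)
        obtain ⟨z, hz, hz0⟩ := this ⟨le_of_lt hGx', le_of_lt hGm⟩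
        exact h0 z ⟨lt_of_lt_of_le hx.1 hz.1, lt_of_le_of_lt hz.2 hmIoo.2⟩ hz0
      · exact absurd (hxm ▸ hGx') (lt_asymm hGm)
      · have hsub : Set.Icc m x ⊆ Set.Icc u v := Set.Icc_subset_Icc (le_of_lt hmIoo.1) (le_of_lt hx.2)
        have := intermediate_value_Icc' (le_of_lt hxm) (hGcont.mono hsub)
        obtain ⟨z, hz, hz0⟩ := this ⟨le_of_lt hGx', le_of_lt hGm⟩
        exact h0 z ⟨lt_of_lt_of_le hmIoo.1 hz.1, lt_of_le_of_lt hz.2 hx.2⟩ hz0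
  obtain ⟨c, hc1, hc2⟩ := exists_rat_btwn huv
  rcases hsign with hsign | hsign
  · -- f' ≥ 0 on RatIcc
    have hpos : ∀ a ∈ RatIcc u v, 0 ≤ f' a := by
      intro a haM
      have h1 : f' a = G (a:ℝ) := (hGQ a haM).symm
      rw [h1]
      refine ge_of_tendsto (hG (a:ℝ)) (Eventually.of_forall fun n => ?_)
      have := hGQ (s (a:ℝ) n) (hsM _ n)
      rw [← this]
      exact le_of_lt (hsign _ ⟨hs1 _ n, hs2 _ n⟩)
    have hc' : 0 < f' c := by
      rw [← hGQ c ⟨le_of_lt hc1, le_of_lt hc2⟩]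
      exact hsign _ ⟨hc1, hc2⟩
    exact hmc_contra u v f f' hunif hpos fu fv hfu hfv heq c hc1 hc2 hc'
  · -- f' ≤ 0 : apply to -f, -f'
    have hunifneg : UniformDeriv (RatIcc u v) (fun q => -f q) (RatIcc u v) (fun q => -f' q) := by
      intro ε hε
      obtain ⟨δ, hδ, HH⟩ := hunif ε hε
      refine ⟨δ, hδ, fun a ha b hb h1 h2 => ?_⟩
      have := HH a ha b hb h1 h2
      have heq2 : (-f b - -f a) / ((b:ℝ) - a) - -f' a = -((f b - f a) / ((b:ℝ) - a) - f' a) := by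
        ring
      rw [heq2, abs_neg]
      exact this
    have hposneg : ∀ a ∈ RatIcc u v, 0 ≤ -f' a := by
      intro a haM
      have h1 : f' a = G (a:ℝ) := (hGQ a haM).symm
      rw [h1, neg_nonneg]
      refine le_of_tendsto (hG (a:ℝ)) (Eventually.of_forall fun n => ?_)
      rw [← hGQ (s (a:ℝ) n) (hsM _ n)]
      exact le_of_lt (hsign _ ⟨hs1 _ n, hs2 _ n⟩)
    have hfuneg : ExtVal (RatIcc u v) (fun q => -f q) u (-fu) := by
      intro a haM hax
      exact (hfu a haM hax).neg
    have hfvneg : ExtVal (RatIcc u v) (fun q => -f q) v (-fv) := by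
      intro a haM hax
      exact (hfv a haM hax).neg
    have hc' : 0 < -f' c := by
      rw [← hGQ c ⟨le_of_lt hc1, le_of_lt hc2⟩, neg_pos]
      exact hsign _ ⟨hc1, hc2⟩
    exact hmc_contra u v (fun q => -f q) (fun q => -f' q) hunifneg hposneg
      (-fu) (-fv) hfuneg hfvneg (by rw [heq]) c hc1 hc2 hc'
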